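/- arXiv:2006.10246 — 3 statements merged into one kernel-verified Lean document; each statement's English description precedes it below -/
import Mathlib

section
/- For a positive semi-definite 2×2 matrix K = [[K1, K3],[K3, K2]] with K1, K2 > 0, and (z1, z2) ~ N(0, K), the expectation E[ReLU(z1)·ReLU(z2)] equals (1/(2π))·(c(π − arccos(c)) + √(1 − c²))·√(K1·K2), where c = K3/√(K1·K2) and ReLU(x) = max(0, x). -/
open MeasureTheory ProbabilityTheory Real
open scoped ENNReal NNReal

/-- The standard Gaussian measure on `ℝ × ℝ`. -/
noncomputable def stdGauss2 : Measure (ℝ × ℝ) :=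
  (gaussianReal 0 1).prod (gaussianReal 0 1)

/-- First coordinate of a centered bivariate Gaussian with covariance
`[[K1, K3], [K3, K2]]`, realized from two independent standard Gaussians. -/
noncomputable def gaussZ1 (K1 : ℝ) (p : ℝ × ℝ) : ℝ := Real.sqrt K1 * p.1

/-- Second coordinate of a centered bivariate Gaussian with covariance
`[[K1, K3], [K3, K2]]`, realized from two independent standard Gaussians. -/
noncomputable def gaussZ2 (K1 K2 K3 : ℝ) (p : ℝ × ℝ) : ℝ :=
  (K3 / Real.sqrt K1) * p.1 + Real.sqrt (K2 - K3 ^ 2 / K1) * p.2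

lemma radial_integral : ∫ r in Set.Ioi (0:ℝ), r^3 * Real.exp (-r^2/2) = 2 := by
  have hderiv : ∀ x ∈ Set.Ioi (0:ℝ),
      HasDerivAt (fun r : ℝ => -(r^2+2) * Real.exp (-r^2/2)) (x^3 * Real.exp (-x^2/2)) x := by
    intro x _
    have h1 : HasDerivAt (fun r : ℝ => -(r^2+2)) (-(2*x)) x := by
      exact (((hasDerivAt_pow 2 x).add_const 2).neg).congr_deriv (by norm_num)
    have h2 : HasDerivAt (fun r : ℝ => -r^2/2) (-x) x := by
      have := ((hasDerivAt_pow 2 x).neg.div_const 2)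
      simpa using this.congr_deriv (by ring)
    have h3 := h1.mul h2.exp
    refine h3.congr_deriv ?_
    ring
  have hpos : ∀ x ∈ Set.Ioi (0:ℝ), 0 ≤ x^3 * Real.exp (-x^2/2) := by
    intro x hx
    have : (0:ℝ) < x := hx
    positivity
  have hcont : ContinuousWithinAt (fun r : ℝ => -(r^2+2) * Real.exp (-r^2/2)) (Set.Ici 0) 0 := by
    exact (Continuous.continuousWithinAt (by continuity))
  have htend : Filter.Tendsto (fun r : ℝ => -(r^2+2) * Real.exp (-r^2/2)) Filter.atTop (nhds 0) := by
    have hsq : Filter.Tendsto (fun r : ℝ => r^2/2) Filter.atTop Filter.atTop := by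
      apply Filter.Tendsto.atTop_div_const two_pos
      exact Filter.tendsto_pow_atTop two_ne_zero
    have hu : Filter.Tendsto (fun u : ℝ => u * Real.exp (-u)) Filter.atTop (nhds 0) := by
      simpa using Real.tendsto_pow_mul_exp_neg_atTop_nhds_zero 1
    have he : Filter.Tendsto (fun u : ℝ => Real.exp (-u)) Filter.atTop (nhds 0) :=
      Real.tendsto_exp_atBot.comp Filter.tendsto_neg_atTop_atBot
    have inner : Filter.Tendsto (fun u : ℝ => -(2*u+2) * Real.exp (-u)) Filter.atTop (nhds 0) := by
      have := (hu.const_mul (-2)).add (he.const_mul (-2))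
      simp only [mul_zero, add_zero, neg_zero, zero_add] at this
      refine this.congr (fun u => by ring)
    have hcomp := inner.comp hsq
    refine hcomp.congr (fun r => ?_)
    simp only [Function.comp_apply]
    ring_nf
  have := integral_Ioi_of_hasDerivAt_of_nonneg hcont hderiv hpos htend
  rw [this]
  norm_num

lemma angular_integral (θ0 : ℝ) (h0 : 0 ≤ θ0) (hπ : θ0 ≤ π) :
    ∫ θ in Set.Ioo (-π) π, max (Real.cos θ) 0 * max (Real.cos (θ - θ0)) 0 =
      (Real.sin θ0 + (π - θ0) * Real.cos θ0) / 2 := by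
  have hpi := Real.pi_pos
  have step1 : ∫ θ in Set.Ioo (-π) π, max (Real.cos θ) 0 * max (Real.cos (θ - θ0)) 0 =
      ∫ θ in Set.Ioo (-π) π,
        (Set.Ioo (θ0 - π/2) (π/2)).indicator (fun θ => Real.cos θ * Real.cos (θ - θ0)) θ := by
    refine setIntegral_congr_fun measurableSet_Ioo (fun θ hθ => ?_)
    obtain ⟨hθ1, hθ2⟩ := hθ
    by_cases hmem : θ ∈ Set.Ioo (θ0 - π/2) (π/2)
    · rw [Set.indicator_of_mem hmem]
      obtain ⟨hm1, hm2⟩ := hmem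
      rw [max_eq_left (Real.cos_nonneg_of_mem_Icc ⟨by linarith, by linarith⟩),
        max_eq_left (Real.cos_nonneg_of_mem_Icc ⟨by linarith, by linarith⟩)]
    · rw [Set.indicator_of_notMem hmem]
      by_cases hc : Real.cos θ ≤ 0
      · rw [max_eq_right hc, zero_mul]
      · push_neg at hc
        -- cos θ > 0 and θ ∈ (-π, π) implies θ ∈ (-π/2, π/2)
        have hl : -(π/2) < θ := by
          by_contra h
          push_neg at h
          have : Real.cos (-θ) ≤ 0 :=
            Real.cos_nonpos_of_pi_div_two_le_of_le (by linarith) (by linarith)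
          rw [Real.cos_neg] at this
          linarith
        have hr : θ < π/2 := by
          by_contra h
          push_neg at h
          have : Real.cos θ ≤ 0 :=
            Real.cos_nonpos_of_pi_div_two_le_of_le (by linarith) (by linarith)
          linarith
        rw [Set.mem_Ioo] at hmem
        push_neg at hmem
        have hle : θ ≤ θ0 - π/2 := by
          by_contra h
          push_neg at h
          exact absurd (hmem h) (not_le.mpr hr)
        have : Real.cos (-(θ - θ0)) ≤ 0 :=
          Real.cos_nonpos_of_pi_div_two_le_of_le (by linarith) (by linarith)
        rw [Real.cos_neg] at this
        rw [max_eq_right this, mul_zero]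
  rw [step1, setIntegral_indicator measurableSet_Ioo,
    Set.inter_eq_self_of_subset_right (Set.Ioo_subset_Ioo (by linarith) (by linarith)),
    ← integral_Ioc_eq_integral_Ioo,
    ← intervalIntegral.integral_of_le (by linarith)]
  have key : ∀ θ : ℝ, HasDerivAt (fun t => Real.sin (2*t - θ0)/4 + t * Real.cos θ0 / 2)
      (Real.cos θ * Real.cos (θ - θ0)) θ := by
    intro θ
    have h1 : HasDerivAt (fun t : ℝ => 2*t - θ0) 2 θ := by
      simpa using ((hasDerivAt_id θ).const_mul 2).sub_const θ0
    have h2 := (h1.sin.div_const 4).add (((hasDerivAt_id θ).mul_const (Real.cos θ0)).div_const 2)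
    refine h2.congr_deriv ?_
    have hA := Real.cos_add θ (θ - θ0)
    have hB := Real.cos_sub θ (θ - θ0)
    rw [show θ + (θ - θ0) = 2*θ - θ0 by ring] at hA
    rw [show θ - (θ - θ0) = θ0 by ring] at hB
    rw [hA, hB]
    ring
  rw [intervalIntegral.integral_eq_sub_of_hasDerivAt (fun θ _ => key θ)
    (Continuous.intervalIntegrable (Real.continuous_cos.mul ((Real.continuous_cos.comp (continuous_id.sub continuous_const)))) _ _)]
  rw [show 2*(π/2) - θ0 = π - θ0 by ring, Real.sin_pi_sub,
    show 2*(θ0 - π/2) - θ0 = -(π - θ0) by ring, Real.sin_neg, Real.sin_pi_sub]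
  ring

lemma stdGauss2_eq_withDensity :
    stdGauss2 = (volume : Measure (ℝ × ℝ)).withDensity
      (fun p => ((Real.toNNReal (gaussianPDFReal 0 1 p.1 * gaussianPDFReal 0 1 p.2) : ℝ≥0) : ℝ≥0∞)) := by
  rw [stdGauss2, Measure.volume_eq_prod]
  refine Measure.prod_eq (fun s t hs ht => ?_)
  rw [withDensity_apply _ (hs.prod ht), ← Measure.prod_restrict]
  have hmf : AEMeasurable (fun x : ℝ => ENNReal.ofReal (gaussianPDFReal 0 1 x))
      (volume.restrict s) := ((measurable_gaussianPDFReal 0 1).ennreal_ofReal).aemeasurable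
  have hmg : AEMeasurable (fun y : ℝ => ENNReal.ofReal (gaussianPDFReal 0 1 y))
      (volume.restrict t) := ((measurable_gaussianPDFReal 0 1).ennreal_ofReal).aemeasurable
  have hsplit : ∀ p : ℝ × ℝ,
      ((Real.toNNReal (gaussianPDFReal 0 1 p.1 * gaussianPDFReal 0 1 p.2) : ℝ≥0) : ℝ≥0∞)
        = ENNReal.ofReal (gaussianPDFReal 0 1 p.1) * ENNReal.ofReal (gaussianPDFReal 0 1 p.2) := by
    intro p
    rw [← ENNReal.ofReal_mul (gaussianPDFReal_nonneg 0 1 p.1)]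
    rfl
  simp_rw [hsplit]
  rw [lintegral_prod_mul hmf hmg,
    gaussianReal_apply 0 one_ne_zero s, gaussianReal_apply 0 one_ne_zero t]
  rfl

/-- For a PSD 2×2 covariance `K = [[K1,K3],[K3,K2]]` with `K1, K2 > 0` and
`(z1, z2) ∼ N(0, K)`, the expectation `E[ReLU(z1) · ReLU(z2)]` equals
`(1/(2π)) (c (π − arccos c) + √(1 − c²)) √(K1 K2)` with `c = K3/√(K1 K2)`. -/
theorem rntk_Vphi_relu (K1 K2 K3 : ℝ) (hK1 : 0 < K1) (hK2 : 0 < K2)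
    (hPSD : K3 ^ 2 ≤ K1 * K2) :
    ∫ p, max (gaussZ1 K1 p) 0 * max (gaussZ2 K1 K2 K3 p) 0 ∂stdGauss2 =
      (1 / (2 * π)) *
        ((K3 / Real.sqrt (K1 * K2)) * (π - Real.arccos (K3 / Real.sqrt (K1 * K2))) +
          Real.sqrt (1 - (K3 / Real.sqrt (K1 * K2)) ^ 2)) * Real.sqrt (K1 * K2) := by
  have hpi := Real.pi_pos
  have hKK : (0:ℝ) < K1 * K2 := mul_pos hK1 hK2
  have hsK1 : (0:ℝ) < Real.sqrt K1 := Real.sqrt_pos.mpr hK1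
  have hsK2 : (0:ℝ) < Real.sqrt K2 := Real.sqrt_pos.mpr hK2
  have hmul : Real.sqrt (K1 * K2) = Real.sqrt K1 * Real.sqrt K2 := Real.sqrt_mul hK1.le K2
  set c : ℝ := K3 / Real.sqrt (K1 * K2) with hc_def
  have hc2eq : c ^ 2 = K3 ^ 2 / (K1 * K2) := by
    rw [hc_def, div_pow, Real.sq_sqrt hKK.le]
  have hc2 : c ^ 2 ≤ 1 := by
    rw [hc2eq, div_le_one hKK]; exact hPSD
  have habs : |c| ≤ 1 := (sq_le_one_iff_abs_le_one c).mp hc2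
  have hcm : -1 ≤ c := neg_le_of_abs_le habs
  have hcM : c ≤ 1 := le_of_abs_le habs
  set θ0 : ℝ := Real.arccos c with hθ0_def
  have h0 : 0 ≤ θ0 := Real.arccos_nonneg c
  have hπ' : θ0 ≤ π := Real.arccos_le_pi c
  have hcos : Real.cos θ0 = c := Real.cos_arccos hcm hcM
  have hsin : Real.sin θ0 = Real.sqrt (1 - c ^ 2) := Real.sin_arccos c
  have ha : K3 / Real.sqrt K1 = Real.sqrt K2 * c := by
    rw [hc_def, hmul]; field_simp
  have hb : Real.sqrt (K2 - K3 ^ 2 / K1) = Real.sqrt K2 * Real.sqrt (1 - c ^ 2) := by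
    rw [← Real.sqrt_mul hK2.le]
    congr 1
    rw [hc2eq]
    field_simp
  -- density measurability
  have hdmeas : Measurable fun p : ℝ × ℝ =>
      Real.toNNReal (gaussianPDFReal 0 1 p.1 * gaussianPDFReal 0 1 p.2) :=
    (((measurable_gaussianPDFReal 0 1).comp measurable_fst).mul
      ((measurable_gaussianPDFReal 0 1).comp measurable_snd)).real_toNNReal
  rw [stdGauss2_eq_withDensity, integral_withDensity_eq_integral_smul hdmeas]
  have hsmul : ∀ p : ℝ × ℝ,
      Real.toNNReal (gaussianPDFReal 0 1 p.1 * gaussianPDFReal 0 1 p.2) •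
          (max (gaussZ1 K1 p) 0 * max (gaussZ2 K1 K2 K3 p) 0) =
        (gaussianPDFReal 0 1 p.1 * gaussianPDFReal 0 1 p.2) *
          (max (gaussZ1 K1 p) 0 * max (gaussZ2 K1 K2 K3 p) 0) := by
    intro p
    rw [NNReal.smul_def, Real.coe_toNNReal _
      (mul_nonneg (gaussianPDFReal_nonneg 0 1 p.1) (gaussianPDFReal_nonneg 0 1 p.2)),
      smul_eq_mul]
  simp_rw [hsmul]
  rw [← integral_comp_polarCoord_symm]
  have htarget : polarCoord.target = Set.Ioi (0:ℝ) ×ˢ Set.Ioo (-π) π := rfl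
  have hsymm : ∀ p : ℝ × ℝ, polarCoord.symm p = (p.1 * Real.cos p.2, p.1 * Real.sin p.2) :=
    fun p => rfl
  have hgauss1 : ∀ x : ℝ, gaussianPDFReal 0 1 x = (Real.sqrt (2*π))⁻¹ * Real.exp (-x^2/2) := by
    intro x
    simp [gaussianPDFReal]
  set C : ℝ := Real.sqrt (K1 * K2) * (2*π)⁻¹ with hC_def
  have hEq : Set.EqOn
      (fun p : ℝ × ℝ => p.1 • ((gaussianPDFReal 0 1 (polarCoord.symm p).1 *
          gaussianPDFReal 0 1 (polarCoord.symm p).2) *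
          (max (gaussZ1 K1 (polarCoord.symm p)) 0 * max (gaussZ2 K1 K2 K3 (polarCoord.symm p)) 0)))
      (fun p : ℝ × ℝ => (C * (p.1 ^ 3 * Real.exp (-p.1 ^ 2 / 2))) *
          (max (Real.cos p.2) 0 * max (Real.cos (p.2 - θ0)) 0))
      polarCoord.target := by
    rintro ⟨r, θ⟩ hp
    rw [htarget] at hp
    obtain ⟨hr, -⟩ := hp
    have hr' : (0:ℝ) < r := hr
    simp only [hsymm]
    have hD : gaussianPDFReal 0 1 (r * Real.cos θ) * gaussianPDFReal 0 1 (r * Real.sin θ) =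
        (2*π)⁻¹ * Real.exp (-r^2/2) := by
      rw [hgauss1, hgauss1]
      have hsum : (r * Real.cos θ)^2 + (r * Real.sin θ)^2 = r^2 := by
        have := Real.sin_sq_add_cos_sq θ
        nlinarith
      rw [show (Real.sqrt (2*π))⁻¹ * Real.exp (-(r * Real.cos θ)^2/2) *
          ((Real.sqrt (2*π))⁻¹ * Real.exp (-(r * Real.sin θ)^2/2)) =
          ((Real.sqrt (2*π))⁻¹ * (Real.sqrt (2*π))⁻¹) *
          (Real.exp (-(r * Real.cos θ)^2/2) * Real.exp (-(r * Real.sin θ)^2/2)) by ring,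
        ← Real.exp_add, ← mul_inv, Real.mul_self_sqrt (by positivity),
        show -(r * Real.cos θ)^2/2 + -(r * Real.sin θ)^2/2
          = -((r * Real.cos θ)^2 + (r * Real.sin θ)^2)/2 by ring, hsum]
    have hM1 : max (gaussZ1 K1 (r * Real.cos θ, r * Real.sin θ)) 0 =
        (Real.sqrt K1 * r) * max (Real.cos θ) 0 := by
      rw [gaussZ1]
      rw [show Real.sqrt K1 * (r * Real.cos θ, r * Real.sin θ).1
        = (Real.sqrt K1 * r) * Real.cos θ from by ring,
        mul_max_of_nonneg _ _ (by positivity), mul_zero]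
    have hM2 : max (gaussZ2 K1 K2 K3 (r * Real.cos θ, r * Real.sin θ)) 0 =
        (Real.sqrt K2 * r) * max (Real.cos (θ - θ0)) 0 := by
      rw [gaussZ2]
      have hval : (K3 / Real.sqrt K1) * (r * Real.cos θ, r * Real.sin θ).1 +
          Real.sqrt (K2 - K3 ^ 2 / K1) * (r * Real.cos θ, r * Real.sin θ).2
          = (Real.sqrt K2 * r) * Real.cos (θ - θ0) := by
        rw [Real.cos_sub, hcos, hsin]
        show (K3 / Real.sqrt K1) * (r * Real.cos θ) +
            Real.sqrt (K2 - K3 ^ 2 / K1) * (r * Real.sin θ) = _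
        rw [ha, hb]
        ring
      rw [hval, mul_max_of_nonneg _ _ (by positivity), mul_zero]
    rw [hD, hM1, hM2]
    show r * _ = _
    rw [hC_def, hmul]
    ring
  rw [setIntegral_congr_fun (htarget ▸ (measurableSet_Ioi.prod measurableSet_Ioo)) hEq,
    htarget, Measure.volume_eq_prod, ← Measure.prod_restrict,
    integral_prod_mul (f := fun r : ℝ => C * (r ^ 3 * Real.exp (-r ^ 2 / 2)))
      (g := fun θ : ℝ => max (Real.cos θ) 0 * max (Real.cos (θ - θ0)) 0),
    MeasureTheory.integral_const_mul, radial_integral,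
    angular_integral θ0 h0 hπ', hsin, hcos, hC_def]
  rw [hθ0_def]
  ring
end

section
/- For a positive semi-definite 2×2 matrix K = [[K1, K3],[K3, K2]] with K1, K2 > 0, and (z1, z2) ~ N(0, K), the expectation E[ReLU'(z1)·ReLU'(z2)] equals (1/(2π))·(π − arccos(c)), where c = K3/√(K1·K2) and ReLU'(x) = 1 if x > 0 and 0 if x < 0 (the derivative of ReLU, defined almost everywhere). -/
open MeasureTheory ProbabilityTheory Real

/-- The a.e. derivative of ReLU: the Heaviside step function. -/
noncomputable def reluDeriv (x : ℝ) : ℝ := if 0 < x then 1 else 0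

open Set

lemma rntk_pdf_simp (x : ℝ) :
    gaussianPDFReal 0 1 x = (Real.sqrt (2 * π))⁻¹ * Real.exp (-(x ^ 2) / 2) := by
  simp [gaussianPDFReal]

lemma rntk_stdGauss2_eq : stdGauss2 = (volume : Measure (ℝ × ℝ)).withDensity
    (fun p => gaussianPDF 0 1 p.1 * gaussianPDF 0 1 p.2) := by
  have hP : IsProbabilityMeasure (volume.withDensity (gaussianPDF 0 1)) := by
    rw [← gaussianReal_of_var_ne_zero 0 one_ne_zero]; infer_instance
  rw [stdGauss2, gaussianReal_of_var_ne_zero 0 one_ne_zero]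
  refine Measure.prod_eq fun s t hs ht => ?_
  rw [withDensity_apply _ (hs.prod ht), withDensity_apply _ hs, withDensity_apply _ ht,
    Measure.volume_eq_prod .., ← Measure.prod_restrict,
    lintegral_prod_mul ((measurable_gaussianPDF 0 1).aemeasurable)
      ((measurable_gaussianPDF 0 1).aemeasurable)]

lemma rntk_integral_stdGauss2 (F : ℝ × ℝ → ℝ) :
    ∫ p, F p ∂stdGauss2 =
      ∫ p : ℝ × ℝ, gaussianPDFReal 0 1 p.1 * gaussianPDFReal 0 1 p.2 * F p := by
  have hmeas : Measurable fun p : ℝ × ℝ =>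
      (gaussianPDFReal 0 1 p.1 * gaussianPDFReal 0 1 p.2).toNNReal :=
    (((measurable_gaussianPDFReal 0 1).comp measurable_fst).mul
      ((measurable_gaussianPDFReal 0 1).comp measurable_snd)).real_toNNReal
  have hd : (fun p : ℝ × ℝ => gaussianPDF 0 1 p.1 * gaussianPDF 0 1 p.2)
      = fun p => (((gaussianPDFReal 0 1 p.1 * gaussianPDFReal 0 1 p.2).toNNReal : NNReal) :
        ENNReal) := by
    funext p
    rw [gaussianPDF, gaussianPDF, ← ENNReal.ofReal_mul (gaussianPDFReal_nonneg 0 1 _)]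
    rfl
  rw [rntk_stdGauss2_eq, hd, integral_withDensity_eq_integral_smul hmeas]
  congr 1
  funext p
  rw [NNReal.smul_def, Real.coe_toNNReal _
    (mul_nonneg (gaussianPDFReal_nonneg 0 1 _) (gaussianPDFReal_nonneg 0 1 _)), smul_eq_mul]

lemma rntk_r_integral : ∫ r in Ioi (0:ℝ), r * Real.exp (-(r ^ 2) / 2) = 1 := by
  have h : ∀ x ∈ Ioi (0:ℝ), HasDerivAt (fun r : ℝ => -Real.exp (-(r ^ 2) / 2))
      (x * Real.exp (-(x ^ 2) / 2)) x := by
    intro x _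
    have h1 : HasDerivAt (fun r : ℝ => -(r ^ 2) / 2) (-x) x := by
      have h := (hasDerivAt_pow 2 x).neg.div_const 2
      refine h.congr_deriv ?_
      norm_num
      ring
    have h2 := (h1.exp).neg
    exact h2.congr_deriv (by ring)
  have hpos : ∀ x ∈ Ioi (0:ℝ), 0 ≤ x * Real.exp (-(x ^ 2) / 2) := fun x hx =>
    mul_nonneg (le_of_lt hx) (Real.exp_nonneg _)
  have hcont : ContinuousWithinAt (fun r : ℝ => -Real.exp (-(r ^ 2) / 2)) (Ici 0) 0 :=
    (Continuous.continuousWithinAt (by continuity))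
  have htend : Filter.Tendsto (fun r : ℝ => -Real.exp (-(r ^ 2) / 2)) Filter.atTop (nhds 0) := by
    have h1 : Filter.Tendsto (fun r : ℝ => -(r ^ 2) / 2) Filter.atTop Filter.atBot := by
      apply Filter.Tendsto.atBot_div_const (by norm_num)
      exact Filter.tendsto_neg_atBot_iff.mpr (Filter.tendsto_pow_atTop two_ne_zero)
    have := (Real.tendsto_exp_atBot.comp h1).neg
    simpa using this
  have := integral_Ioi_of_hasDerivAt_of_nonneg hcont h hpos htend
  rw [this]
  norm_num

lemma rntk_angle_iff {φ θ : ℝ} (hφ0 : 0 ≤ φ) (hφπ : φ ≤ π) (hθ1 : -π < θ) (hθ2 : θ < π) :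
    (0 < Real.cos θ ∧ 0 < Real.cos (θ - φ)) ↔ (φ - π / 2 < θ ∧ θ < π / 2) := by
  constructor
  · rintro ⟨h1, h2⟩
    have hθa : θ < π / 2 := by
      by_contra h
      push_neg at h
      exact absurd (Real.cos_nonpos_of_pi_div_two_le_of_le h (by linarith)) (not_le.mpr h1)
    have hθb : -(π / 2) < θ := by
      by_contra h
      push_neg at h
      have hle : Real.cos (-θ) ≤ 0 :=
        Real.cos_nonpos_of_pi_div_two_le_of_le (by linarith) (by linarith)
      rw [Real.cos_neg] at hle
      exact absurd hle (not_le.mpr h1)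
    refine ⟨?_, hθa⟩
    by_contra h
    push_neg at h
    have hle : Real.cos (φ - θ) ≤ 0 :=
      Real.cos_nonpos_of_pi_div_two_le_of_le (by linarith) (by linarith)
    rw [← Real.cos_neg, neg_sub] at hle
    exact absurd hle (not_le.mpr h2)
  · rintro ⟨h1, h2⟩
    exact ⟨Real.cos_pos_of_mem_Ioo ⟨by linarith, h2⟩,
      Real.cos_pos_of_mem_Ioo ⟨by linarith, by linarith⟩⟩

/-- For a PSD 2×2 covariance `K = [[K1,K3],[K3,K2]]` with `K1, K2 > 0` and
`(z1, z2) ∼ N(0, K)`, `E[ReLU'(z1) · ReLU'(z2)] = (1/(2π)) (π − arccos c)`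
with `c = K3/√(K1 K2)`. -/
theorem rntk_Vphi_relu_deriv (K1 K2 K3 : ℝ) (hK1 : 0 < K1) (hK2 : 0 < K2)
    (hPSD : K3 ^ 2 ≤ K1 * K2) :
    ∫ p, reluDeriv (gaussZ1 K1 p) * reluDeriv (gaussZ2 K1 K2 K3 p) ∂stdGauss2 =
      (1 / (2 * π)) * (π - Real.arccos (K3 / Real.sqrt (K1 * K2))) := by
  set c : ℝ := K3 / Real.sqrt (K1 * K2) with hc
  set φ : ℝ := Real.arccos c with hφ
  have hsK1 : 0 < Real.sqrt K1 := Real.sqrt_pos.mpr hK1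
  have hsK2 : 0 < Real.sqrt K2 := Real.sqrt_pos.mpr hK2
  have hsK12 : 0 < Real.sqrt (K1 * K2) := Real.sqrt_pos.mpr (mul_pos hK1 hK2)
  have habs : |K3| ≤ Real.sqrt (K1 * K2) := by
    rw [← Real.sqrt_sq_eq_abs]; exact Real.sqrt_le_sqrt hPSD
  have hcle : |c| ≤ 1 := by
    rw [hc, abs_div, abs_of_pos hsK12]
    exact div_le_one_of_le₀ habs hsK12.le
  have hc1 := abs_le.mp hcle
  have hφ0 : 0 ≤ φ := Real.arccos_nonneg c
  have hφπ : φ ≤ π := Real.arccos_le_pi c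
  have hcosφ : Real.cos φ = c := Real.cos_arccos hc1.1 hc1.2
  have hsinφ : Real.sin φ = Real.sqrt (1 - c ^ 2) := Real.sin_arccos c
  have hA : Real.sqrt K2 * Real.cos φ = K3 / Real.sqrt K1 := by
    rw [hcosφ, hc, Real.sqrt_mul hK1.le]
    field_simp
  have h12 : Real.sqrt (K1 * K2) ^ 2 = K1 * K2 := Real.sq_sqrt (mul_pos hK1 hK2).le
  have hB : Real.sqrt K2 * Real.sin φ = Real.sqrt (K2 - K3 ^ 2 / K1) := by
    rw [hsinφ, ← Real.sqrt_mul hK2.le]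
    congr 1
    rw [hc, div_pow, h12]
    field_simp
  have hπ := Real.pi_pos
  rw [rntk_integral_stdGauss2, ← integral_comp_polarCoord_symm]
  have hEq : EqOn
      (fun p : ℝ × ℝ => p.1 • (gaussianPDFReal 0 1 (polarCoord.symm p).1 *
        gaussianPDFReal 0 1 (polarCoord.symm p).2 *
        (reluDeriv (gaussZ1 K1 (polarCoord.symm p)) *
          reluDeriv (gaussZ2 K1 K2 K3 (polarCoord.symm p)))))
      (fun p : ℝ × ℝ => ((2 * π)⁻¹ * (p.1 * Real.exp (-(p.1 ^ 2) / 2))) *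
        (if φ - π / 2 < p.2 ∧ p.2 < π / 2 then (1 : ℝ) else 0))
      polarCoord.target := by
    rintro ⟨r, θ⟩ hp
    simp only [polarCoord_target, Set.mem_prod, mem_Ioi, mem_Ioo] at hp
    have hr : (0:ℝ) < r := hp.1
    have hθ1 : -π < θ := hp.2.1
    have hθ2 : θ < π := hp.2.2
    simp only [polarCoord_symm_apply]
    have e1 : reluDeriv (gaussZ1 K1 (r * Real.cos θ, r * Real.sin θ)) =
        if 0 < Real.cos θ then (1 : ℝ) else 0 := by
      have hiff : (0 < Real.sqrt K1 * (r * Real.cos θ)) ↔ 0 < Real.cos θ := by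
        rw [← mul_assoc]
        exact mul_pos_iff_of_pos_left (mul_pos hsK1 hr)
      simp only [gaussZ1, reluDeriv]
      exact if_congr hiff rfl rfl
    have key : (K3 / Real.sqrt K1) * (r * Real.cos θ) +
        Real.sqrt (K2 - K3 ^ 2 / K1) * (r * Real.sin θ) =
        (r * Real.sqrt K2) * Real.cos (θ - φ) := by
      rw [← hA, ← hB, Real.cos_sub]
      ring
    have e2 : reluDeriv (gaussZ2 K1 K2 K3 (r * Real.cos θ, r * Real.sin θ)) =
        if 0 < Real.cos (θ - φ) then (1 : ℝ) else 0 := by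
      have hiff : (0 < K3 / Real.sqrt K1 * (r * Real.cos θ) +
          Real.sqrt (K2 - K3 ^ 2 / K1) * (r * Real.sin θ)) ↔ 0 < Real.cos (θ - φ) := by
        rw [key]
        exact mul_pos_iff_of_pos_left (mul_pos hr hsK2)
      simp only [gaussZ2, reluDeriv]
      exact if_congr hiff rfl rfl
    have hs2 : (Real.sqrt (2 * π))⁻¹ * (Real.sqrt (2 * π))⁻¹ = (2 * π)⁻¹ := by
      rw [← mul_inv, Real.mul_self_sqrt (by positivity)]
    have hrr : (r * Real.cos θ) ^ 2 + (r * Real.sin θ) ^ 2 = r ^ 2 := by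
      have h := Real.sin_sq_add_cos_sq θ
      calc (r * Real.cos θ) ^ 2 + (r * Real.sin θ) ^ 2
          = r ^ 2 * (Real.sin θ ^ 2 + Real.cos θ ^ 2) := by ring
        _ = r ^ 2 := by rw [h, mul_one]
    have e3 : gaussianPDFReal 0 1 (r * Real.cos θ) * gaussianPDFReal 0 1 (r * Real.sin θ) =
        (2 * π)⁻¹ * Real.exp (-(r ^ 2) / 2) := by
      rw [rntk_pdf_simp, rntk_pdf_simp]
      calc (Real.sqrt (2 * π))⁻¹ * Real.exp (-((r * Real.cos θ) ^ 2) / 2) *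
            ((Real.sqrt (2 * π))⁻¹ * Real.exp (-((r * Real.sin θ) ^ 2) / 2))
          = ((Real.sqrt (2 * π))⁻¹ * (Real.sqrt (2 * π))⁻¹) *
            (Real.exp (-((r * Real.cos θ) ^ 2) / 2) *
              Real.exp (-((r * Real.sin θ) ^ 2) / 2)) := by ring
        _ = (2 * π)⁻¹ * Real.exp (-((r * Real.cos θ) ^ 2) / 2 +
              -((r * Real.sin θ) ^ 2) / 2) := by rw [hs2, ← Real.exp_add]
        _ = (2 * π)⁻¹ * Real.exp (-(r ^ 2) / 2) := by rw [show -((r * Real.cos θ) ^ 2) / 2 +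
              -((r * Real.sin θ) ^ 2) / 2 = -((r * Real.cos θ) ^ 2 + (r * Real.sin θ) ^ 2) / 2
              by ring, hrr]
    have e4 : (if 0 < Real.cos θ then (1 : ℝ) else 0) *
        (if 0 < Real.cos (θ - φ) then (1 : ℝ) else 0) =
        if φ - π / 2 < θ ∧ θ < π / 2 then (1 : ℝ) else 0 := by
      have hiff := rntk_angle_iff hφ0 hφπ hθ1 hθ2
      by_cases h1 : 0 < Real.cos θ
      · by_cases h2 : 0 < Real.cos (θ - φ)
        · rw [if_pos h1, if_pos h2, if_pos (hiff.mp ⟨h1, h2⟩), one_mul]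
        · rw [if_pos h1, if_neg h2, one_mul, if_neg (fun h => h2 (hiff.mpr h).2)]
      · rw [if_neg h1, zero_mul, if_neg (fun h => h1 (hiff.mpr h).1)]
    simp only [e1, e2, e3]
    rw [smul_eq_mul, ← e4]
    ring
  rw [setIntegral_congr_fun (polarCoord.open_target.measurableSet) hEq, polarCoord_target,
    Measure.volume_eq_prod .., ← Measure.prod_restrict]
  rw [show (∫ x : ℝ × ℝ, ((2 * π)⁻¹ * (x.1 * Real.exp (-(x.1 ^ 2) / 2))) *
        (if φ - π / 2 < x.2 ∧ x.2 < π / 2 then (1 : ℝ) else 0)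
        ∂(volume.restrict (Ioi 0)).prod (volume.restrict (Ioo (-π) π))) =
      (∫ r in Ioi (0:ℝ), (2 * π)⁻¹ * (r * Real.exp (-(r ^ 2) / 2))) *
      (∫ θ in Ioo (-π) π, (if φ - π / 2 < θ ∧ θ < π / 2 then (1 : ℝ) else 0))
    from integral_prod_mul (fun r : ℝ => (2 * π)⁻¹ * (r * Real.exp (-(r ^ 2) / 2)))
      (fun θ : ℝ => if φ - π / 2 < θ ∧ θ < π / 2 then (1 : ℝ) else 0)]
  have hI1 : (∫ r in Ioi (0:ℝ), (2 * π)⁻¹ * (r * Real.exp (-(r ^ 2) / 2))) = (2 * π)⁻¹ := by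
    rw [integral_const_mul, rntk_r_integral, mul_one]
  have hI2 : (∫ θ in Ioo (-π) π, (if φ - π / 2 < θ ∧ θ < π / 2 then (1 : ℝ) else 0)) =
      π - φ := by
    have hind : (fun θ : ℝ => (if φ - π / 2 < θ ∧ θ < π / 2 then (1 : ℝ) else 0)) =
        fun θ => Set.indicator (Ioo (φ - π / 2) (π / 2)) (fun _ => (1 : ℝ)) θ := by
      funext θ
      rw [Set.indicator_apply]
      simp [mem_Ioo]
    rw [hind, integral_indicator measurableSet_Ioo, setIntegral_const, measureReal_def,
      Measure.restrict_apply measurableSet_Ioo,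
      Set.inter_eq_left.mpr (Set.Ioo_subset_Ioo (by linarith) (by linarith)),
      Real.volume_Ioo, ENNReal.toReal_ofReal (by linarith), smul_eq_mul, mul_one]
    ring
  rw [hI1, hI2]
  rw [hφ, hc]
  field_simp
end

section
/- For a positive semi-definite 2×2 matrix K = [[K1, K3],[K3, K2]] and (z1, z2) ~ N(0, K), the expectation E[erf'(z1)·erf'(z2)] equals 4/(π·√((1 + 2K1)(1 + 2K2) − 4K3²)), where erf'(x) = (2/√π)·e^{−x²}. -/
open MeasureTheory ProbabilityTheory Real
open scoped NNReal ENNReal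

/-- The derivative of the Gauss error function: `erf'(x) = (2/√π) e^{−x²}`. -/
noncomputable def erfDeriv (x : ℝ) : ℝ := (2 / Real.sqrt π) * Real.exp (-x ^ 2)

/-- Integral against the standard Gaussian as a Lebesgue integral. -/
lemma integral_gauss01 (g : ℝ → ℝ) :
    ∫ x, g x ∂(gaussianReal 0 1) = ∫ x, gaussianPDFReal 0 1 x * g x := by
  rw [gaussianReal_of_var_ne_zero _ one_ne_zero]
  rw [show gaussianPDF 0 1 = fun x => ((Real.toNNReal (gaussianPDFReal 0 1 x) : ℝ≥0) : ℝ≥0∞)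
    from rfl]
  rw [integral_withDensity_eq_integral_smul (measurable_gaussianPDFReal 0 1).real_toNNReal]
  congr 1
  ext x
  rw [NNReal.smul_def, Real.coe_toNNReal _ (gaussianPDFReal_nonneg 0 1 x), smul_eq_mul]

lemma gauss_exp_integral (t c : ℝ) :
    ∫ x, rexp (-(t * x + c) ^ 2) ∂(gaussianReal 0 1)
      = (Real.sqrt (2 * t ^ 2 + 1))⁻¹ * rexp (-c ^ 2 / (2 * t ^ 2 + 1)) := by
  rw [integral_gauss01]
  have hA : (0:ℝ) < t ^ 2 + 1 / 2 := by positivity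
  set A : ℝ := t ^ 2 + 1 / 2 with hAdef
  have hm : ∀ x : ℝ, gaussianPDFReal 0 1 x * rexp (-(t * x + c) ^ 2)
      = (Real.sqrt (2 * π))⁻¹ * (rexp (-c ^ 2 / (2 * A)) *
          rexp (-A * (x + t * c / A) ^ 2)) := by
    intro x
    rw [gaussianPDFReal]
    push_cast
    rw [mul_assoc, ← Real.exp_add, ← Real.exp_add]
    congr 2
    · norm_num
    · field_simp
      ring
  simp only [hm]
  rw [integral_const_mul, integral_const_mul,
    integral_add_right_eq_self (fun x : ℝ => rexp (-A * x ^ 2)) (t * c / A),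
    integral_gaussian]
  have h2A : (2:ℝ) * t ^ 2 + 1 = 2 * A := by rw [hAdef]; ring
  rw [h2A]
  have hsq : Real.sqrt (π / A) = Real.sqrt (2 * π) * (Real.sqrt (2 * A))⁻¹ := by
    rw [← Real.sqrt_inv, ← Real.sqrt_mul (by positivity)]
    congr 1
    field_simp
  rw [hsq]
  have h2π : Real.sqrt (2 * π) ≠ 0 := by positivity
  field_simp

lemma gauss2_exp (s t u : ℝ) :
    ∫ p, rexp (-(s * p.1) ^ 2 - (t * p.1 + u * p.2) ^ 2) ∂stdGauss2
      = (Real.sqrt ((1 + 2 * s ^ 2) * (1 + 2 * u ^ 2) + 2 * t ^ 2))⁻¹ := by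
  have hcont : Continuous fun p : ℝ × ℝ =>
      rexp (-(s * p.1) ^ 2 - (t * p.1 + u * p.2) ^ 2) := by fun_prop
  haveI : IsProbabilityMeasure stdGauss2 := by rw [stdGauss2]; infer_instance
  have hint : Integrable (fun p : ℝ × ℝ =>
      rexp (-(s * p.1) ^ 2 - (t * p.1 + u * p.2) ^ 2)) stdGauss2 := by
    refine (integrable_const (1:ℝ)).mono' hcont.aestronglyMeasurable ?_
    filter_upwards with p
    rw [Real.norm_eq_abs, abs_of_nonneg (Real.exp_nonneg _)]
    exact Real.exp_le_one_iff.2 (by nlinarith [sq_nonneg (s * p.1), sq_nonneg (t * p.1 + u * p.2)])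
  rw [stdGauss2] at hint ⊢
  rw [MeasureTheory.integral_prod _ hint]
  have hinner : ∀ x : ℝ,
      (∫ y, rexp (-(s * x) ^ 2 - (t * x + u * y) ^ 2) ∂(gaussianReal 0 1))
      = rexp (-(s * x) ^ 2) * ((Real.sqrt (2 * u ^ 2 + 1))⁻¹ *
          rexp (-(t * x) ^ 2 / (2 * u ^ 2 + 1))) := by
    intro x
    have : ∀ y : ℝ, rexp (-(s * x) ^ 2 - (t * x + u * y) ^ 2)
        = rexp (-(s * x) ^ 2) * rexp (-(u * y + t * x) ^ 2) := by
      intro y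
      rw [← Real.exp_add]
      congr 1
      ring
    simp only [this]
    rw [integral_const_mul, gauss_exp_integral u (t * x)]
  simp only [hinner]
  have hw : (0:ℝ) ≤ s ^ 2 + t ^ 2 / (2 * u ^ 2 + 1) := by positivity
  set w : ℝ := Real.sqrt (s ^ 2 + t ^ 2 / (2 * u ^ 2 + 1)) with hwdef
  have hw2 : w ^ 2 = s ^ 2 + t ^ 2 / (2 * u ^ 2 + 1) := Real.sq_sqrt hw
  have hout : ∀ x : ℝ, rexp (-(s * x) ^ 2) * ((Real.sqrt (2 * u ^ 2 + 1))⁻¹ *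
        rexp (-(t * x) ^ 2 / (2 * u ^ 2 + 1)))
      = (Real.sqrt (2 * u ^ 2 + 1))⁻¹ * rexp (-(w * x + 0) ^ 2) := by
    intro x
    have h2u : (0:ℝ) < 2 * u ^ 2 + 1 := by positivity
    have hexp : (-(s * x) ^ 2) + (-(t * x) ^ 2 / (2 * u ^ 2 + 1)) = -(w * x + 0) ^ 2 := by
      have h1 : (w * x + 0) ^ 2 = w ^ 2 * x ^ 2 := by ring
      rw [h1, hw2]
      field_simp
      ring
    rw [← hexp, Real.exp_add]
    ring
  simp only [hout]
  rw [integral_const_mul, gauss_exp_integral w 0]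
  have h2u : (0:ℝ) < 2 * u ^ 2 + 1 := by positivity
  have harg : (1 + 2 * s ^ 2) * (1 + 2 * u ^ 2) + 2 * t ^ 2
      = (2 * u ^ 2 + 1) * (2 * w ^ 2 + 1) := by
    rw [hw2]; field_simp; ring
  rw [harg, Real.sqrt_mul (by positivity), mul_inv]
  norm_num

/-- For a PSD 2×2 covariance `K = [[K1,K3],[K3,K2]]` and `(z1, z2) ∼ N(0, K)`,
`E[erf'(z1) · erf'(z2)] = 4/(π √((1+2K1)(1+2K2) − 4K3²))`. -/
theorem rntk_Vphi_erf_deriv (K1 K2 K3 : ℝ) (hK1 : 0 ≤ K1) (hK2 : 0 ≤ K2)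
    (hPSD : K3 ^ 2 ≤ K1 * K2) :
    ∫ p, erfDeriv (gaussZ1 K1 p) * erfDeriv (gaussZ2 K1 K2 K3 p) ∂stdGauss2 =
      4 / (π * Real.sqrt ((1 + 2 * K1) * (1 + 2 * K2) - 4 * K3 ^ 2)) := by
  set s : ℝ := Real.sqrt K1 with hsdef
  set t : ℝ := K3 / Real.sqrt K1 with htdef
  set u : ℝ := Real.sqrt (K2 - K3 ^ 2 / K1) with hudef
  have hpoint : ∀ p : ℝ × ℝ, erfDeriv (gaussZ1 K1 p) * erfDeriv (gaussZ2 K1 K2 K3 p)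
      = (4 / π) * rexp (-(s * p.1) ^ 2 - (t * p.1 + u * p.2) ^ 2) := by
    intro p
    rw [erfDeriv, erfDeriv, gaussZ1, gaussZ2]
    have hππ : Real.sqrt π * Real.sqrt π = π := Real.mul_self_sqrt Real.pi_pos.le
    rw [show (2 / Real.sqrt π * rexp (-(Real.sqrt K1 * p.1) ^ 2)) *
        (2 / Real.sqrt π * rexp (-(K3 / Real.sqrt K1 * p.1 +
          Real.sqrt (K2 - K3 ^ 2 / K1) * p.2) ^ 2))
      = (2 / Real.sqrt π * (2 / Real.sqrt π)) *
        (rexp (-(Real.sqrt K1 * p.1) ^ 2) * rexp (-(K3 / Real.sqrt K1 * p.1 +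
          Real.sqrt (K2 - K3 ^ 2 / K1) * p.2) ^ 2)) by ring, ← Real.exp_add]
    congr 1
    · rw [div_mul_div_comm, hππ]
      norm_num
  simp only [hpoint]
  rw [integral_const_mul, gauss2_exp]
  -- algebra identifying the two square-root arguments
  have hd : K3 ^ 2 / K1 * K1 = K3 ^ 2 := by
    rcases eq_or_lt_of_le hK1 with h | h
    · have hK3 : K3 = 0 := by nlinarith
      simp [hK3, ← h]
    · field_simp
  have hs2 : s ^ 2 = K1 := Real.sq_sqrt hK1
  have ht2 : t ^ 2 = K3 ^ 2 / K1 := by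
    rw [htdef, div_pow, Real.sq_sqrt hK1]
  have huarg : (0:ℝ) ≤ K2 - K3 ^ 2 / K1 := by
    rcases eq_or_lt_of_le hK1 with h | h
    · have hK3 : K3 = 0 := by nlinarith
      simp [hK3, ← h, hK2]
    · rw [sub_nonneg, div_le_iff₀ h]
      nlinarith
  have hu2 : u ^ 2 = K2 - K3 ^ 2 / K1 := Real.sq_sqrt huarg
  have hargeq : (1 + 2 * s ^ 2) * (1 + 2 * u ^ 2) + 2 * t ^ 2
      = (1 + 2 * K1) * (1 + 2 * K2) - 4 * K3 ^ 2 := by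
    rw [hs2, hu2, ht2]
    nlinarith [hd]
  rw [hargeq, ← div_eq_mul_inv, div_div]
end
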